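/- For all integers m, n with m > n ≥ 2, there is a bijection between (i) the set of plane trees with m vertices, of which exactly n are leaves, such that every nonleaf vertex has at least two children, and (ii) the set of partitions with exactly m − n faces of a convex polygon with n + 1 vertices. -/

import Mathlib

namespace ImplicitDD

/-- The face of a dissection of the convex polygon with vertices `0, 1, …, N` whose top edge is
`(a, b)`: it consists of `a`, `b`, and all vertices `a < v < b` that are not strictly below
another edge of the dissection nested below `(a, b)`. -/
def faceOf (D : Finset (ℕ × ℕ)) (a b : ℕ) : Finset ℕ :=
  (Finset.Icc a b).filter fun v =>
    v = a ∨ v = b ∨ ∀ e ∈ D, a ≤ e.1 → e.2 ≤ b → e ≠ (a, b) → ¬(e.1 < v ∧ v < e.2)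

/-- A partition of the convex polygon with ordered vertices `0, 1, …, N`: a set of pairwise
noncrossing straight line segments (diagonals) between nonadjacent vertices. -/
structure PolyPartition (N : ℕ) where
  /-- The set of diagonals `(a, b)` with `a < b`, connecting nonadjacent vertices. -/
  diags : Finset (ℕ × ℕ)
  valid : ∀ e ∈ diags, e.1 + 2 ≤ e.2 ∧ e.2 ≤ N ∧ ¬(e.1 = 0 ∧ e.2 = N)
  noncross : ∀ e ∈ diags, ∀ e' ∈ diags, ¬(e.1 < e'.1 ∧ e'.1 < e.2 ∧ e.2 < e'.2)

/-- The set `F(π)` of (bounded, oriented) faces of a polygon partition, each face recorded as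
the set of its vertices; every face has a unique top edge, which is either a diagonal or the
outer edge `(0, N)`. -/
def PolyPartition.faces {N : ℕ} (π : PolyPartition N) : Finset (Finset ℕ) :=
  (insert (0, N) π.diags).image fun e => faceOf π.diags e.1 e.2

end ImplicitDD

namespace ImplicitDD

/-- A plane tree: a root together with a linearly ordered (possibly empty) list of subtrees. -/
inductive PTree : Type where
  | node : List PTree → PTree

/-- The number of vertices of a plane tree. -/
def PTree.vertexCount : PTree → ℕ
  | .node ts => 1 + (ts.attach.map fun t => PTree.vertexCount t.1).sum
decreasing_by
  have := List.sizeOf_lt_of_mem t.2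
  simp only [PTree.node.sizeOf_spec]
  omega

/-- The number of leaves of a plane tree (a single vertex counts as one leaf). -/
def PTree.leafCount : PTree → ℕ
  | .node [] => 1
  | .node ts => (ts.attach.map fun t => PTree.leafCount t.1).sum
decreasing_by
  have := List.sizeOf_lt_of_mem t.2
  simp only [PTree.node.sizeOf_spec]
  omega

/-- Every nonleaf vertex of the plane tree has at least two descendants. -/
def PTree.Branching : PTree → Prop
  | .node ts => ts.length ≠ 1 ∧ ∀ t ∈ ts, PTree.Branching t
decreasing_by
  have := List.sizeOf_lt_of_mem ‹_ ∈ ts›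
  simp only [PTree.node.sizeOf_spec]
  omega

/-- The number of vertices of a plane tree having exactly `i` descendants. -/
def PTree.degCount (i : ℕ) : PTree → ℕ
  | .node ts => (if ts.length = i then 1 else 0) + (ts.attach.map fun t => PTree.degCount i t.1).sum
decreasing_by
  have := List.sizeOf_lt_of_mem t.2
  simp only [PTree.node.sizeOf_spec]
  omega

end ImplicitDD

namespace ImplicitDD

open PTree

/-- sum of leaf counts of a list of trees -/
def lcL (l : List PTree) : ℕ := (l.map PTree.leafCount).sum

lemma lcL_nil : lcL [] = 0 := rfl
lemma lcL_cons (t : PTree) (l : List PTree) : lcL (t :: l) = t.leafCount + lcL l := by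
  simp [lcL]

lemma leafCount_nil : PTree.leafCount (.node []) = 1 := by rw [PTree.leafCount]

lemma leafCount_cons (t : PTree) (ts : List PTree) :
    PTree.leafCount (.node (t :: ts)) = lcL (t :: ts) := by
  rw [PTree.leafCount] <;> first
    | (rw [List.map_attach_eq_pmap]; simp [List.pmap_eq_map, lcL])
    | simp

lemma vertexCount_node (ts : List PTree) :
    PTree.vertexCount (.node ts) = 1 + (ts.map PTree.vertexCount).sum := by
  rw [PTree.vertexCount, List.map_attach_eq_pmap]; simp [List.pmap_eq_map]

lemma branching_node (ts : List PTree) :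
    PTree.Branching (.node ts) ↔ ts.length ≠ 1 ∧ ∀ t ∈ ts, PTree.Branching t := by
  rw [PTree.Branching]

/-- strong induction principle for plane trees -/
lemma PTree.strongInd (P : PTree → Prop)
    (h : ∀ ts : List PTree, (∀ t ∈ ts, P t) → P (.node ts)) : ∀ τ, P τ := by
  have key : ∀ k (τ : PTree), sizeOf τ ≤ k → P τ := by
    intro k
    induction k with
    | zero =>
      intro τ hτ
      cases τ with
      | node ts => simp only [PTree.node.sizeOf_spec] at hτ; omega
    | succ k ih =>
      intro τ hτ
      cases τ with
      | node ts =>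
        apply h
        intro t ht
        apply ih
        have := List.sizeOf_lt_of_mem ht
        simp only [PTree.node.sizeOf_spec] at hτ
        omega
  exact fun τ => key (sizeOf τ) τ le_rfl

lemma leafCount_pos : ∀ τ : PTree, 1 ≤ τ.leafCount := by
  apply PTree.strongInd
  intro ts ih
  cases ts with
  | nil => rw [leafCount_nil]
  | cons t l =>
    rw [leafCount_cons, lcL_cons]
    have := ih t (by simp)
    omega

/-- internal-vertex count -/
def inC : PTree → ℕ
  | .node ts => (if ts.isEmpty then 0 else 1) + (ts.attach.map fun t => inC t.1).sum
decreasing_by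
  have := List.sizeOf_lt_of_mem t.2
  simp only [PTree.node.sizeOf_spec]
  omega

def inCL (l : List PTree) : ℕ := (l.map inC).sum

lemma inCL_nil : inCL [] = 0 := rfl
lemma inCL_cons (t : PTree) (l : List PTree) : inCL (t :: l) = inC t + inCL l := by
  simp [inCL]

lemma inC_node (ts : List PTree) :
    inC (.node ts) = (if ts.isEmpty then 0 else 1) + inCL ts := by
  rw [inC, List.map_attach_eq_pmap]; simp [List.pmap_eq_map, inCL]

lemma inC_nil : inC (.node []) = 0 := by rw [inC_node]; rfl

lemma inC_cons (t : PTree) (ts : List PTree) :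
    inC (.node (t :: ts)) = 1 + inCL (t :: ts) := by
  rw [inC_node]; rfl

lemma vertexCount_eq : ∀ τ : PTree, τ.vertexCount = τ.leafCount + inC τ := by
  apply PTree.strongInd
  intro ts ih
  rw [vertexCount_node, inC_node]
  have hsum : (ts.map PTree.vertexCount).sum = lcL ts + inCL ts := by
    induction ts with
    | nil => simp [lcL, inCL]
    | cons t l ihl =>
      have h1 := ih t (by simp)
      have h2 : (l.map PTree.vertexCount).sum = lcL l + inCL l := by
        apply ihl; intro t' ht'; exact ih t' (by simp [ht'])
      simp only [List.map_cons, List.sum_cons, lcL_cons, inCL_cons, h1, h2]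
      omega
  cases ts with
  | nil => simp [leafCount_nil, lcL, inCL]
  | cons t l =>
    rw [leafCount_cons, if_neg (by simp), hsum]
    omega

end ImplicitDD
namespace ImplicitDD

mutual
/-- the set of "top edges" (diagonals) of a tree placed on interval starting at `a`,
including the tree's own top edge when it is internal -/
def toD (a : ℕ) : PTree → Finset (ℕ × ℕ)
  | .node [] => ∅
  | .node (t :: ts) =>
      insert (a, a + PTree.leafCount (.node (t :: ts))) (toDL a (t :: ts))

/-- union of `toD` over a list of trees placed consecutively starting at `a` -/
def toDL (a : ℕ) : List PTree → Finset (ℕ × ℕ)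
  | [] => ∅
  | t :: ts => toD a t ∪ toDL (a + t.leafCount) ts
end

lemma toD_nil (a : ℕ) : toD a (.node []) = ∅ := by rw [toD]

lemma toD_cons (a : ℕ) (t : PTree) (ts : List PTree) :
    toD a (.node (t :: ts)) =
      insert (a, a + PTree.leafCount (.node (t :: ts))) (toDL a (t :: ts)) := by
  rw [toD]

lemma toDL_nil (a : ℕ) : toDL a [] = ∅ := by rw [toDL]

lemma toDL_cons (a : ℕ) (t : PTree) (ts : List PTree) :
    toDL a (t :: ts) = toD a t ∪ toDL (a + t.leafCount) ts := by
  rw [toDL]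

/-- span statement for a single tree -/
def SpanT (τ : PTree) : Prop :=
  ∀ a, PTree.Branching τ → ∀ e ∈ toD a τ, a ≤ e.1 ∧ e.1 + 2 ≤ e.2 ∧ e.2 ≤ a + τ.leafCount

lemma spanL_aux (l : List PTree) (H : ∀ t ∈ l, SpanT t) :
    ∀ a, (∀ t ∈ l, PTree.Branching t) →
      ∀ e ∈ toDL a l, a ≤ e.1 ∧ e.1 + 2 ≤ e.2 ∧ e.2 ≤ a + lcL l := by
  induction l with
  | nil => intro a _ e he; rw [toDL_nil] at he; simp at he
  | cons t ts ih =>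
    intro a hbr e he
    rw [toDL_cons] at he
    rcases Finset.mem_union.1 he with h | h
    · have := H t (by simp) a (hbr t (by simp)) e h
      have hle : t.leafCount ≤ lcL (t :: ts) := by rw [lcL_cons]; omega
      exact ⟨this.1, this.2.1, le_trans this.2.2 (by omega)⟩
    · have := ih (fun t' ht' => H t' (by simp [ht'])) (a + t.leafCount)
        (fun t' ht' => hbr t' (by simp [ht'])) e h
      rw [lcL_cons]
      omega

lemma spanT : ∀ τ : PTree, SpanT τ := by
  apply PTree.strongInd
  intro ts ih a hbr e he
  cases ts with
  | nil => rw [toD_nil] at he; simp at he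
  | cons t l =>
    rw [toD_cons] at he
    rw [branching_node] at hbr
    have hlen : (t :: l).length ≠ 1 := hbr.1
    have hL2 : 2 ≤ PTree.leafCount (.node (t :: l)) := by
      rw [leafCount_cons]
      cases l with
      | nil => simp at hlen
      | cons t' l' =>
        rw [lcL_cons, lcL_cons]
        have := leafCount_pos t
        have := leafCount_pos t'
        omega
    rcases Finset.mem_insert.1 he with h | h
    · subst h; exact ⟨le_rfl, by omega, le_rfl⟩
    · have := spanL_aux (t :: l) (fun t' ht' => ih t' ht') a hbr.2 e h
      rw [leafCount_cons] at *
      exact this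

/-- elements of `toDL` over a cons list either belong to the head's interval or start
strictly later -/
lemma toDL_mem_cases {a : ℕ} {t : PTree} {ts : List PTree} {e : ℕ × ℕ}
    (he : e ∈ toDL a (t :: ts)) :
    e ∈ toD a t ∨ e ∈ toDL (a + t.leafCount) ts := by
  rw [toDL_cons] at he; exact Finset.mem_union.1 he

/-- noncrossing statement -/
def NC (s : Finset (ℕ × ℕ)) : Prop :=
  ∀ e ∈ s, ∀ e' ∈ s, ¬(e.1 < e'.1 ∧ e'.1 < e.2 ∧ e.2 < e'.2)

def NCT (τ : PTree) : Prop := ∀ a, PTree.Branching τ → NC (toD a τ)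

lemma ncL_aux (l : List PTree) (Hs : ∀ t ∈ l, SpanT t) (H : ∀ t ∈ l, NCT t) :
    ∀ a, (∀ t ∈ l, PTree.Branching t) → NC (toDL a l) := by
  induction l with
  | nil => intro a _ e he; rw [toDL_nil] at he; simp at he
  | cons t ts ih =>
    intro a hbr e he e' he' hcross
    have hspan1 := spanL_aux (t :: ts) Hs a hbr
    rcases toDL_mem_cases he with h | h <;> rcases toDL_mem_cases he' with h' | h'
    · exact H t (by simp) a (hbr t (by simp)) e h e' h' hcross
    · -- e in head interval, e' starts at ≥ a + lc t, but e.2 ≤ a + lc t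
      have s1 := Hs t (by simp) a (hbr t (by simp)) e h
      have s2 := spanL_aux ts (fun x hx => Hs x (by simp [hx]))
        (a + t.leafCount) (fun x hx => hbr x (by simp [hx])) e' h'
      omega
    · have s1 := Hs t (by simp) a (hbr t (by simp)) e' h'
      have s2 := spanL_aux ts (fun x hx => Hs x (by simp [hx]))
        (a + t.leafCount) (fun x hx => hbr x (by simp [hx])) e h
      omega
    · exact ih (fun x hx => Hs x (by simp [hx])) (fun x hx => H x (by simp [hx]))
        (a + t.leafCount) (fun x hx => hbr x (by simp [hx])) e h e' h' hcross

lemma ncT : ∀ τ : PTree, NCT τ := by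
  apply PTree.strongInd
  intro ts ih a hbr e he e' he' hcross
  cases ts with
  | nil => rw [toD_nil] at he; simp at he
  | cons t l =>
    rw [toD_cons] at he he'
    rw [branching_node] at hbr
    have hsub : ∀ x ∈ toDL a (t :: l),
        a ≤ x.1 ∧ x.1 + 2 ≤ x.2 ∧ x.2 ≤ a + PTree.leafCount (.node (t :: l)) := by
      intro x hx
      have := spanL_aux (t :: l) (fun t' ht' => spanT t') a hbr.2 x hx
      rw [leafCount_cons]; exact this
    rcases Finset.mem_insert.1 he with h | h <;> rcases Finset.mem_insert.1 he' with h' | h'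
    · subst h; subst h'; exact absurd hcross (by simp)
    · subst h; have := hsub e' h'; simp at hcross; omega
    · subst h'; have := hsub e h; simp at hcross; omega
    · exact ncL_aux (t :: l) (fun t' ht' => spanT t') (fun t' ht' => ih t' ht')
        a hbr.2 e h e' h' hcross

end ImplicitDD
namespace ImplicitDD

def CardT (τ : PTree) : Prop :=
  ∀ a, PTree.Branching τ → (toD a τ).card = inC τ

lemma cardL_aux (l : List PTree) (H : ∀ t ∈ l, CardT t) :
    ∀ a, (∀ t ∈ l, PTree.Branching t) → (toDL a l).card = inCL l := by
  induction l with
  | nil => intro a _; rw [toDL_nil, inCL_nil]; rfl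
  | cons t ts ih =>
    intro a hbr
    rw [toDL_cons, inCL_cons]
    have hdisj : Disjoint (toD a t) (toDL (a + t.leafCount) ts) := by
      rw [Finset.disjoint_left]
      intro e he he'
      have s1 := spanT t a (hbr t (by simp)) e he
      have s2 := spanL_aux ts (fun x hx => spanT x) (a + t.leafCount)
        (fun x hx => hbr x (by simp [hx])) e he'
      omega
    rw [Finset.card_union_of_disjoint hdisj,
      H t (by simp) a (hbr t (by simp)),
      ih (fun x hx => H x (by simp [hx])) (a + t.leafCount) (fun x hx => hbr x (by simp [hx]))]

lemma cardT : ∀ τ : PTree, CardT τ := by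
  apply PTree.strongInd
  intro ts ih a hbr
  cases ts with
  | nil => rw [toD_nil, inC_nil]; rfl
  | cons t l =>
    rw [toD_cons, inC_cons]
    rw [branching_node] at hbr
    have hnotmem : (a, a + PTree.leafCount (.node (t :: l))) ∉ toDL a (t :: l) := by
      intro hmem
      have hlt : t.leafCount < PTree.leafCount (.node (t :: l)) := by
        rw [leafCount_cons, lcL_cons]
        cases l with
        | nil => exact absurd rfl hbr.1
        | cons t' l' =>
          rw [lcL_cons]
          have := leafCount_pos t'
          omega
      rcases toDL_mem_cases hmem with h | h
      · have := spanT t a (hbr.2 t (by simp)) _ h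
        simp at this
        omega
      · have := spanL_aux l (fun x hx => spanT x) (a + t.leafCount)
          (fun x hx => hbr.2 x (by simp [hx])) _ h
        simp at this
        have := leafCount_pos t
        omega
    rw [Finset.card_insert_of_notMem hnotmem,
      cardL_aux (t :: l) (fun x hx => ih x hx) a hbr.2]
    omega

/-- the top edge is a member for internal trees -/
lemma top_mem_toD (a : ℕ) (t : PTree) (ts : List PTree) :
    (a, a + PTree.leafCount (.node (t :: ts))) ∈ toD a (.node (t :: ts)) := by
  rw [toD_cons]; exact Finset.mem_insert_self _ _

end ImplicitDD
namespace ImplicitDD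

/-- the next cut point after `c`, bounded by `bnd` -/
def nextCut (D : Finset (ℕ × ℕ)) (c bnd : ℕ) : ℕ :=
  let S := (D.filter fun e => e.1 = c ∧ c + 2 ≤ e.2 ∧ e.2 ≤ bnd).image Prod.snd
  if h : S.Nonempty then S.max' h else c + 1

lemma nextCut_ge (D : Finset (ℕ × ℕ)) (c bnd : ℕ) : c + 1 ≤ nextCut D c bnd := by
  rw [nextCut]
  split
  · next h =>
    have := Finset.max'_mem _ h
    simp only [Finset.mem_image, Finset.mem_filter] at this
    obtain ⟨e, ⟨_, _, h2, _⟩, he⟩ := this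
    omega
  · omega

lemma nextCut_le (D : Finset (ℕ × ℕ)) (c bnd : ℕ) (h : c + 1 ≤ bnd) :
    nextCut D c bnd ≤ bnd := by
  rw [nextCut]
  split
  · next hne =>
    have := Finset.max'_mem _ hne
    simp only [Finset.mem_image, Finset.mem_filter] at this
    obtain ⟨e, ⟨_, _, _, h3⟩, he⟩ := this
    omega
  · omega

lemma nextCut_spec (D : Finset (ℕ × ℕ)) (c bnd : ℕ) :
    nextCut D c bnd = c + 1 ∨
      ((c, nextCut D c bnd) ∈ D ∧ c + 2 ≤ nextCut D c bnd ∧ nextCut D c bnd ≤ bnd) := by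
  rw [nextCut]
  split
  · next hne =>
    right
    have := Finset.max'_mem _ hne
    simp only [Finset.mem_image, Finset.mem_filter] at this
    obtain ⟨e, ⟨he, h1, h2, h3⟩, hsnd⟩ := this
    have hce : e = (c, e.2) := by ext <;> simp [h1]
    have hmem : (c, e.2) ∈ D := hce ▸ he
    exact ⟨hsnd ▸ hmem, hsnd ▸ h2, hsnd ▸ h3⟩
  · left; rfl

lemma nextCut_max {D : Finset (ℕ × ℕ)} {c bnd y : ℕ} (hy : (c, y) ∈ D)
    (h2 : c + 2 ≤ y) (h3 : y ≤ bnd) : y ≤ nextCut D c bnd := by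
  rw [nextCut]
  have hmem : y ∈ (D.filter fun e => e.1 = c ∧ c + 2 ≤ e.2 ∧ e.2 ≤ bnd).image Prod.snd := by
    simp only [Finset.mem_image, Finset.mem_filter]
    exact ⟨(c, y), ⟨hy, rfl, h2, h3⟩, rfl⟩
  split
  · next h => exact Finset.le_max' _ y hmem
  · next h => exact absurd ⟨y, hmem⟩ h

/-- `nextCut` only depends on relevant membership -/
lemma nextCut_congr {D D' : Finset (ℕ × ℕ)} {c bnd : ℕ}
    (h : ∀ y, c + 2 ≤ y → y ≤ bnd → ((c, y) ∈ D ↔ (c, y) ∈ D')) :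
    nextCut D c bnd = nextCut D' c bnd := by
  have : (D.filter fun e => e.1 = c ∧ c + 2 ≤ e.2 ∧ e.2 ≤ bnd)
      = (D'.filter fun e => e.1 = c ∧ c + 2 ≤ e.2 ∧ e.2 ≤ bnd) := by
    ext e
    simp only [Finset.mem_filter]
    constructor
    · rintro ⟨he, h1, h2, h3⟩
      refine ⟨?_, h1, h2, h3⟩
      have heq : e = (c, e.2) := by ext <;> simp [h1]
      rw [heq] at he ⊢
      exact (h e.2 h2 h3).1 he
    · rintro ⟨he, h1, h2, h3⟩
      refine ⟨?_, h1, h2, h3⟩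
      have heq : e = (c, e.2) := by ext <;> simp [h1]
      rw [heq] at he ⊢
      exact (h e.2 h2 h3).2 he
  rw [nextCut, nextCut, this]

mutual
/-- build the subtree for interval `(a, b)` from a diagonal set, with fuel -/
def buildF : ℕ → Finset (ℕ × ℕ) → ℕ → ℕ → PTree
  | 0, _, _, _ => .node []
  | fuel + 1, D, a, b =>
      if b ≤ a + 1 then .node []
      else .node (buildF fuel D a (nextCut D a (b - 1)) :: buildLF fuel D (nextCut D a (b - 1)) b)

/-- build the list of subtrees covering `[c, b]`, with fuel -/
def buildLF : ℕ → Finset (ℕ × ℕ) → ℕ → ℕ → List PTree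
  | 0, _, _, _ => []
  | fuel + 1, D, c, b =>
      if b ≤ c then []
      else buildF fuel D c (nextCut D c b) :: buildLF fuel D (nextCut D c b) b
end

lemma buildF_succ (fuel : ℕ) (D : Finset (ℕ × ℕ)) (a b : ℕ) :
    buildF (fuel + 1) D a b =
      if b ≤ a + 1 then .node []
      else .node (buildF fuel D a (nextCut D a (b - 1)) ::
        buildLF fuel D (nextCut D a (b - 1)) b) := by
  rw [buildF]

lemma buildLF_succ (fuel : ℕ) (D : Finset (ℕ × ℕ)) (c b : ℕ) :
    buildLF (fuel + 1) D c b =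
      if b ≤ c then []
      else buildF fuel D c (nextCut D c b) :: buildLF fuel D (nextCut D c b) b := by
  rw [buildLF]

end ImplicitDD
namespace ImplicitDD

lemma lcL_pos {l : List PTree} (h : l ≠ []) : 1 ≤ lcL l := by
  cases l with
  | nil => exact absurd rfl h
  | cons t l' => rw [lcL_cons]; have := leafCount_pos t; omega

lemma lc_two_le {t' : PTree} {l' : List PTree}
    (hbr : PTree.Branching (.node (t' :: l'))) : 2 ≤ PTree.leafCount (.node (t' :: l')) := by
  rw [branching_node] at hbr
  have hl' : l' ≠ [] := by
    intro h; subst h; simp at hbr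
  rw [leafCount_cons, lcL_cons]
  have := leafCount_pos t'
  have := lcL_pos hl'
  omega


lemma top_mem_toD' (a : ℕ) {t : PTree} (h2 : 2 ≤ t.leafCount) :
    (a, a + t.leafCount) ∈ toD a t := by
  cases t with
  | node ts =>
    cases ts with
    | nil => rw [leafCount_nil] at h2; omega
    | cons t' l' => exact top_mem_toD a t' l'

/-- round trip 1: building from the diagonal set of a tree recovers the tree -/
lemma RT1 : ∀ fuel : ℕ,
    (∀ τ : PTree, PTree.Branching τ → ∀ a : ℕ, ∀ E : Finset (ℕ × ℕ),
      (∀ e : ℕ × ℕ, a ≤ e.1 → e.2 ≤ a + τ.leafCount → e ≠ (a, a + τ.leafCount) →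
        (e ∈ E ↔ e ∈ toD a τ)) →
      2 * τ.leafCount < fuel → buildF fuel E a (a + τ.leafCount) = τ)
    ∧ (∀ l : List PTree, (∀ t ∈ l, PTree.Branching t) → ∀ c : ℕ, ∀ E : Finset (ℕ × ℕ),
      (∀ e : ℕ × ℕ, c ≤ e.1 → e.2 ≤ c + lcL l → (e ∈ E ↔ e ∈ toDL c l)) →
      2 * lcL l + 1 < fuel → buildLF fuel E c (c + lcL l) = l) := by
  intro fuel
  induction fuel with
  | zero =>
    constructor
    · intro τ _ a E _ hf
      have := leafCount_pos τ
      omega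
    · intro l _ c E _ hf
      omega
  | succ fuel ih =>
    obtain ⟨ihT, ihL⟩ := ih
    constructor
    · -- tree part
      intro τ hbr a E hagree hf
      cases τ with
      | node ts =>
        cases ts with
        | nil =>
          rw [leafCount_nil, buildF_succ, if_pos (by omega)]
        | cons t l =>
          have hbr' := (branching_node _).1 hbr
          have hl : l ≠ [] := by intro h; subst h; simp at hbr'
          have hlcl := lcL_pos hl
          have hlt := leafCount_pos t
          have hL : PTree.leafCount (.node (t :: l)) = t.leafCount + lcL l := by
            rw [leafCount_cons, lcL_cons]
          have hL2 : 2 ≤ PTree.leafCount (.node (t :: l)) := by omega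
          set L := PTree.leafCount (.node (t :: l)) with hLdef
          rw [buildF_succ, if_neg (by omega)]
          set x := nextCut E a (a + L - 1) with hxdef
          have hbx : a + L - 1 ≥ a + 1 := by omega
          have hxub := nextCut_le E a (a + L - 1) (by omega)
          have hxlb := nextCut_ge E a (a + L - 1)
          -- x ≤ a + lc t
          have hxle : x ≤ a + t.leafCount := by
            rcases nextCut_spec E a (a + L - 1) with h | ⟨hmem, h2, h3⟩
            · rw [← hxdef] at h; omega
            · rw [← hxdef] at hmem h2 h3
              have hne : ((a, x) : ℕ × ℕ) ≠ (a, a + L) := by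
                simp only [ne_eq, Prod.mk.injEq]; omega
              have hmem' : ((a, x) : ℕ × ℕ) ∈ toD a (.node (t :: l)) :=
                (hagree (a, x) le_rfl (by simp; omega) hne).1 hmem
              rw [toD_cons, ← hLdef] at hmem'
              rcases Finset.mem_insert.1 hmem' with h | h
              · exact absurd h hne
              · rcases toDL_mem_cases h with h | h
                · have := spanT t a (hbr'.2 t (by simp)) _ h
                  simpa using this.2.2
                · have := spanL_aux l (fun s _ => spanT s) (a + t.leafCount)
                    (fun s hs => hbr'.2 s (by simp [hs])) _ h
                  simp at this
                  omega
          have hxge : a + t.leafCount ≤ x := by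
            rcases Nat.lt_or_ge t.leafCount 2 with h1 | hlc2
            · omega
            · have htopmem : ((a, a + t.leafCount) : ℕ × ℕ) ∈ toD a (.node (t :: l)) := by
                rw [toD_cons, toDL_cons]
                exact Finset.mem_insert_of_mem (Finset.mem_union_left _ (top_mem_toD' a hlc2))
              have htopE : ((a, a + t.leafCount) : ℕ × ℕ) ∈ E := by
                refine (hagree _ le_rfl (by simp; omega) ?_).2 ?_
                · simp only [ne_eq, Prod.mk.injEq]; omega
                · exact htopmem
              exact nextCut_max htopE (by omega) (by omega)
          have hx : x = a + t.leafCount := le_antisymm hxle hxge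
          -- first child
          have hchild : buildF fuel E a x = t := by
            rw [hx]
            apply ihT t (hbr'.2 t (by simp)) a E
            · intro e he1 he2 hne
              have hne' : e ≠ (a, a + L) := by
                intro h; subst h; simp at he2; omega
              rw [hagree e he1 (by omega) hne', toD_cons, ← hLdef]
              constructor
              · intro hmem
                rcases Finset.mem_insert.1 hmem with h | h
                · exact absurd h hne'
                · rcases toDL_mem_cases h with h | h
                  · exact h
                  · have := spanL_aux l (fun s _ => spanT s) (a + t.leafCount)
                      (fun s hs => hbr'.2 s (by simp [hs])) _ h
                    omega
              · intro hmem
                exact Finset.mem_insert_of_mem (by rw [toDL_cons]; exact Finset.mem_union_left _ hmem)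
            · omega
          -- remaining children
          have hrest : buildLF fuel E x (a + L) = l := by
            have hxx : a + L = x + lcL l := by omega
            rw [hxx]
            apply ihL l (fun s hs => hbr'.2 s (by simp [hs])) x E
            · intro e he1 he2
              have hne' : e ≠ (a, a + L) := by
                intro h; subst h; simp at he1; omega
              rw [hagree e (by omega) (by omega) hne', toD_cons, ← hLdef]
              constructor
              · intro hmem
                rcases Finset.mem_insert.1 hmem with h | h
                · exact absurd h hne'
                · rcases toDL_mem_cases h with h | h
                  · have := spanT t a (hbr'.2 t (by simp)) _ h
                    omega
                  · rw [← hx] at h; exact h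
              · intro hmem
                refine Finset.mem_insert_of_mem ?_
                rw [toDL_cons]
                exact Finset.mem_union_right _ (by rw [← hx]; exact hmem)
            · omega
          rw [hchild, hrest]
    · -- list part
      intro l hbr c E hagree hf
      cases l with
      | nil =>
        rw [lcL_nil, buildLF_succ, if_pos (by omega)]
      | cons t rest =>
        have hlt := leafCount_pos t
        have hlcl : lcL (t :: rest) = t.leafCount + lcL rest := lcL_cons t rest
        set b := c + lcL (t :: rest) with hbdef
        rw [buildLF_succ, if_neg (by omega)]
        set x := nextCut E c b with hxdef
        have hxub := nextCut_le E c b (by omega)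
        have hxlb := nextCut_ge E c b
        have hxle : x ≤ c + t.leafCount := by
          rcases nextCut_spec E c b with h | ⟨hmem, h2, h3⟩
          · rw [← hxdef] at h; omega
          · rw [← hxdef] at hmem h2 h3
            have hmem' : ((c, x) : ℕ × ℕ) ∈ toDL c (t :: rest) :=
              (hagree (c, x) le_rfl (by simp; omega)).1 hmem
            rcases toDL_mem_cases hmem' with h | h
            · have := spanT t c (hbr t (by simp)) _ h
              simpa using this.2.2
            · have := spanL_aux rest (fun s _ => spanT s) (c + t.leafCount)
                (fun s hs => hbr s (by simp [hs])) _ h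
              simp at this
              omega
        have hxge : c + t.leafCount ≤ x := by
          rcases Nat.lt_or_ge t.leafCount 2 with h1 | hlc2
          · omega
          · have htopmem : ((c, c + t.leafCount) : ℕ × ℕ) ∈ toDL c (t :: rest) := by
              rw [toDL_cons]
              exact Finset.mem_union_left _ (top_mem_toD' c hlc2)
            have htopE : ((c, c + t.leafCount) : ℕ × ℕ) ∈ E := by
              refine (hagree _ le_rfl (by simp; omega)).2 htopmem
            exact nextCut_max htopE (by omega) (by omega)
        have hx : x = c + t.leafCount := le_antisymm hxle hxge
        have hchild : buildF fuel E c x = t := by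
          rw [hx]
          apply ihT t (hbr t (by simp)) c E
          · intro e he1 he2 hne
            rw [hagree e he1 (by omega)]
            constructor
            · intro hmem
              rcases toDL_mem_cases hmem with h | h
              · exact h
              · have := spanL_aux rest (fun s _ => spanT s) (c + t.leafCount)
                  (fun s hs => hbr s (by simp [hs])) _ h
                omega
            · intro hmem
              rw [toDL_cons]
              exact Finset.mem_union_left _ hmem
          · omega
        have hrest : buildLF fuel E x b = rest := by
          have hxx : b = x + lcL rest := by omega
          rw [hxx]
          apply ihL rest (fun s hs => hbr s (by simp [hs])) x E
          · intro e he1 he2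
            rw [hagree e (by omega) (by omega)]
            constructor
            · intro hmem
              rcases toDL_mem_cases hmem with h | h
              · have := spanT t c (hbr t (by simp)) _ h
                omega
              · rw [← hx] at h; exact h
            · intro hmem
              rw [toDL_cons]
              exact Finset.mem_union_right _ (by rw [← hx]; exact hmem)
          · omega
        rw [hchild, hrest]

end ImplicitDD
namespace ImplicitDD

/-- diagonals strictly nested in `(a,b)` -/
def nested (D : Finset (ℕ × ℕ)) (a b : ℕ) : Finset (ℕ × ℕ) :=
  D.filter fun e => a ≤ e.1 ∧ e.2 ≤ b ∧ e ≠ (a, b)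

lemma mem_nested {D : Finset (ℕ × ℕ)} {a b : ℕ} {e : ℕ × ℕ} :
    e ∈ nested D a b ↔ e ∈ D ∧ a ≤ e.1 ∧ e.2 ≤ b ∧ e ≠ (a, b) := by
  simp [nested]

/-- diagonals inside the box `[c, b]` -/
def boxL (D : Finset (ℕ × ℕ)) (c b : ℕ) : Finset (ℕ × ℕ) :=
  D.filter fun e => c ≤ e.1 ∧ e.2 ≤ b

lemma mem_boxL {D : Finset (ℕ × ℕ)} {c b : ℕ} {e : ℕ × ℕ} :
    e ∈ boxL D c b ↔ e ∈ D ∧ c ≤ e.1 ∧ e.2 ≤ b := by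
  simp [boxL]

lemma prod_ne_iff {e : ℕ × ℕ} {a b : ℕ} : e ≠ (a, b) ↔ ¬(e.1 = a ∧ e.2 = b) := by
  rw [not_iff_not, Prod.ext_iff]

/-- round trip 2: the tree built from a valid noncrossing diagonal set -/
lemma RT2 (D : Finset (ℕ × ℕ)) (hval : ∀ e ∈ D, e.1 + 2 ≤ e.2) (hnc : NC D) :
    ∀ fuel : ℕ,
    (∀ a b : ℕ, a < b → 2 * (b - a) < fuel →
      PTree.Branching (buildF fuel D a b) ∧ (buildF fuel D a b).leafCount = b - a ∧
      toD a (buildF fuel D a b) =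
        if a + 1 < b then insert (a, b) (nested D a b) else ∅)
    ∧ (∀ c b : ℕ, c ≤ b → 2 * (b - c) + 1 < fuel →
      (∀ t ∈ buildLF fuel D c b, PTree.Branching t) ∧
      lcL (buildLF fuel D c b) = b - c ∧
      toDL c (buildLF fuel D c b) = boxL D c b) := by
  intro fuel
  induction fuel with
  | zero => exact ⟨fun a b h1 h2 => by omega, fun c b h1 h2 => by omega⟩
  | succ fuel ih =>
    obtain ⟨ihT, ihL⟩ := ih
    constructor
    · intro a b hab hf
      by_cases hb1 : b ≤ a + 1
      · have hb : b = a + 1 := by omega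
        rw [buildF_succ, if_pos hb1]
        refine ⟨(branching_node _).2 (by simp), ?_, ?_⟩
        · rw [leafCount_nil]; omega
        · rw [toD_nil, if_neg (by omega)]
      · -- internal case
        rw [buildF_succ, if_neg hb1]
        set x := nextCut D a (b - 1) with hxdef
        have hxub := nextCut_le D a (b - 1) (by omega)
        have hxlb := nextCut_ge D a (b - 1)
        have hT := ihT a x (by omega) (by omega)
        have hL := ihL x b (by omega) (by omega)
        obtain ⟨hbr1, hlc1, htoD1⟩ := hT
        obtain ⟨hbrL, hlcL', htoDL'⟩ := hL
        set t1 := buildF fuel D a x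
        set ls := buildLF fuel D x b
        have hlsne : ls ≠ [] := by
          intro h
          rw [h, lcL_nil] at hlcL'
          omega
        have hbrall : PTree.Branching (.node (t1 :: ls)) := by
          rw [branching_node]
          constructor
          · intro hcontr
            simp only [List.length_cons] at hcontr
            exact hlsne (List.length_eq_zero_iff.1 (by omega))
          · intro t ht
            rcases List.mem_cons.1 ht with h | h
            · rw [h]; exact hbr1
            · exact hbrL t h
        have hlcall : PTree.leafCount (.node (t1 :: ls)) = b - a := by
          rw [leafCount_cons, lcL_cons, hlc1, hlcL']
          omega
        refine ⟨hbrall, hlcall, ?_⟩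
        rw [if_pos (by omega)]
        rw [toD_cons, hlcall, toDL_cons, hlc1]
        have hax : a + (x - a) = x := by omega
        rw [hax, htoDL']
        have hab' : a + (b - a) = b := by omega
        rw [hab']
        congr 1
        -- nested D a b = toD a t1 ∪ boxL D x b
        rw [htoD1]
        ext e
        rw [mem_nested]
        constructor
        · intro h
          rcases Finset.mem_union.1 h with h | h
          · by_cases hax1 : a + 1 < x
            · rw [if_pos hax1] at h
              rcases Finset.mem_insert.1 h with h | h
              · have hxD : ((a, x) : ℕ × ℕ) ∈ D := by
                  rcases nextCut_spec D a (b - 1) with hh | ⟨hm, _, _⟩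
                  · rw [← hxdef] at hh; omega
                  · rw [← hxdef] at hm; exact hm
                subst h
                exact ⟨hxD, le_rfl, by omega, by rw [prod_ne_iff]; omega⟩
              · rw [mem_nested] at h
                obtain ⟨h1, h2, h3, h4⟩ := h
                exact ⟨h1, h2, by omega, by rw [prod_ne_iff]; have := hval e h1; omega⟩
            · rw [if_neg hax1] at h
              simp at h
          · rw [mem_boxL] at h
            obtain ⟨h1, h2, h3⟩ := h
            exact ⟨h1, by omega, h3, by rw [prod_ne_iff]; omega⟩
        · rintro ⟨heD, he1, he2, hene⟩
          rw [prod_ne_iff] at hene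
          rcases Nat.lt_or_ge e.1 x with hex | hex
          · -- e.1 < x
            have hv := hval e heD
            apply Finset.mem_union_left
            rcases Nat.lt_or_ge a e.1 with hea | hea
            · -- a < e.1 < x : noncross with (a, x)
              have hxD : ((a, x) : ℕ × ℕ) ∈ D := by
                rcases nextCut_spec D a (b - 1) with h | ⟨hm, _, _⟩
                · rw [← hxdef] at h; omega
                · rw [← hxdef] at hm; exact hm
              have := hnc (a, x) hxD e heD
              simp only at this
              have he2x : e.2 ≤ x := by omega
              rw [if_pos (by omega)]
              refine Finset.mem_insert_of_mem (mem_nested.2 ⟨heD, by omega, he2x, ?_⟩)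
              rw [prod_ne_iff]; omega
            · -- e.1 = a
              have he1a : e.1 = a := by omega
              have heb : e.2 ≤ b - 1 := by omega
              have hee : e = (a, e.2) := by ext <;> simp [he1a]
              have hmax : e.2 ≤ x := by
                rw [hxdef]
                exact nextCut_max (hee ▸ heD) (by omega) heb
              rcases Nat.lt_or_ge e.2 x with he2x | he2x
              · rw [if_pos (by omega)]
                refine Finset.mem_insert_of_mem (mem_nested.2 ⟨heD, by omega, by omega, ?_⟩)
                rw [prod_ne_iff]; omega
              · have he2eq : e.2 = x := by omega
                rw [if_pos (by omega)]
                exact Finset.mem_insert.2 (Or.inl (by ext <;> omega))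
          · exact Finset.mem_union_right _ (mem_boxL.2 ⟨heD, hex, he2⟩)
    · -- list part
      intro c b hcb hf
      by_cases hbc : b ≤ c
      · have : b = c := by omega
        rw [buildLF_succ, if_pos hbc]
        refine ⟨by simp, by rw [lcL_nil]; omega, ?_⟩
        rw [toDL_nil]
        symm
        rw [Finset.eq_empty_iff_forall_notMem]
        intro e he
        rw [mem_boxL] at he
        have := hval e he.1
        omega
      · rw [buildLF_succ, if_neg hbc]
        set x := nextCut D c b with hxdef
        have hxub := nextCut_le D c b (by omega)
        have hxlb := nextCut_ge D c b
        have hT := ihT c x (by omega) (by omega)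
        have hL := ihL x b (by omega) (by omega)
        obtain ⟨hbr1, hlc1, htoD1⟩ := hT
        obtain ⟨hbrL, hlcL', htoDL'⟩ := hL
        set t1 := buildF fuel D c x
        set ls := buildLF fuel D x b
        refine ⟨?_, ?_, ?_⟩
        · intro t ht
          rcases List.mem_cons.1 ht with h | h
          · rw [h]; exact hbr1
          · exact hbrL t h
        · rw [lcL_cons, hlc1, hlcL']; omega
        · rw [toDL_cons, hlc1]
          have hcx : c + (x - c) = x := by omega
          rw [hcx, htoDL', htoD1]
          ext e
          rw [mem_boxL]
          constructor
          · intro h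
            rcases Finset.mem_union.1 h with h | h
            · by_cases hcx1 : c + 1 < x
              · rw [if_pos hcx1] at h
                rcases Finset.mem_insert.1 h with h | h
                · have hxD : ((c, x) : ℕ × ℕ) ∈ D := by
                    rcases nextCut_spec D c b with hh | ⟨hm, _, _⟩
                    · rw [← hxdef] at hh; omega
                    · rw [← hxdef] at hm; exact hm
                  subst h
                  exact ⟨hxD, le_rfl, by omega⟩
                · rw [mem_nested] at h
                  obtain ⟨h1, h2, h3, _⟩ := h
                  exact ⟨h1, h2, by omega⟩
              · rw [if_neg hcx1] at h
                simp at h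
            · rw [mem_boxL] at h
              obtain ⟨h1, h2, h3⟩ := h
              exact ⟨h1, by omega, h3⟩
          · rintro ⟨heD, he1, he2⟩
            rcases Nat.lt_or_ge e.1 x with hex | hex
            · have hv := hval e heD
              apply Finset.mem_union_left
              rcases Nat.lt_or_ge c e.1 with hec | hec
              · have hxD : ((c, x) : ℕ × ℕ) ∈ D := by
                  rcases nextCut_spec D c b with h | ⟨hm, _, _⟩
                  · rw [← hxdef] at h; omega
                  · rw [← hxdef] at hm; exact hm
                have := hnc (c, x) hxD e heD
                simp only at this
                have he2x : e.2 ≤ x := by omega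
                rw [if_pos (by omega)]
                refine Finset.mem_insert_of_mem (mem_nested.2 ⟨heD, by omega, he2x, ?_⟩)
                rw [prod_ne_iff]; omega
              · have he1c : e.1 = c := by omega
                have hee : e = (c, e.2) := by ext <;> simp [he1c]
                have hmax : e.2 ≤ x := by
                  rw [hxdef]
                  exact nextCut_max (hee ▸ heD) (by omega) he2
                rcases Nat.lt_or_ge e.2 x with he2x | he2x
                · rw [if_pos (by omega)]
                  refine Finset.mem_insert_of_mem (mem_nested.2 ⟨heD, by omega, by omega, ?_⟩)
                  rw [prod_ne_iff]; omega
                · have he2eq : e.2 = x := by omega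
                  rw [if_pos (by omega)]
                  exact Finset.mem_insert.2 (Or.inl (by ext <;> omega))
            · exact Finset.mem_union_right _ (mem_boxL.2 ⟨heD, hex, he2⟩)

end ImplicitDD
namespace ImplicitDD

lemma faceOf_left_mem (D : Finset (ℕ × ℕ)) {a b : ℕ} (h : a ≤ b) : a ∈ faceOf D a b := by
  rw [faceOf, Finset.mem_filter]
  exact ⟨Finset.mem_Icc.2 ⟨le_rfl, h⟩, Or.inl rfl⟩

lemma faceOf_right_mem (D : Finset (ℕ × ℕ)) {a b : ℕ} (h : a ≤ b) : b ∈ faceOf D a b := by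
  rw [faceOf, Finset.mem_filter]
  exact ⟨Finset.mem_Icc.2 ⟨h, le_rfl⟩, Or.inr (Or.inl rfl)⟩

lemma faceOf_mem_Icc {D : Finset (ℕ × ℕ)} {a b v : ℕ} (h : v ∈ faceOf D a b) :
    a ≤ v ∧ v ≤ b := by
  rw [faceOf, Finset.mem_filter] at h
  exact Finset.mem_Icc.1 h.1

lemma faces_card {N : ℕ} (hN : 2 ≤ N) (π : PolyPartition N) :
    π.faces.card = π.diags.card + 1 := by
  have hnot : ((0, N) : ℕ × ℕ) ∉ π.diags := by
    intro hmem
    obtain ⟨_, _, h⟩ := π.valid _ hmem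
    exact h ⟨rfl, rfl⟩
  have hle : ∀ f ∈ insert ((0, N) : ℕ × ℕ) π.diags, f.1 ≤ f.2 := by
    intro f hf
    rcases Finset.mem_insert.1 hf with h | h
    · subst h; simp
    · have := (π.valid f h).1; omega
  have hinj : Set.InjOn (fun e : ℕ × ℕ => faceOf π.diags e.1 e.2)
      ↑(insert ((0, N) : ℕ × ℕ) π.diags) := by
    intro e he e' he' heq
    simp only at heq
    rw [Finset.mem_coe] at he he'
    have h1 := faceOf_left_mem π.diags (hle e he)
    have h1' := faceOf_left_mem π.diags (hle e' he')
    have h2 := faceOf_right_mem π.diags (hle e he)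
    have h2' := faceOf_right_mem π.diags (hle e' he')
    have ha : e'.1 ∈ faceOf π.diags e.1 e.2 := by rw [heq]; exact h1'
    have hb : e.1 ∈ faceOf π.diags e'.1 e'.2 := by rw [← heq]; exact h1
    have hc : e'.2 ∈ faceOf π.diags e.1 e.2 := by rw [heq]; exact h2'
    have hd : e.2 ∈ faceOf π.diags e'.1 e'.2 := by rw [← heq]; exact h2
    have i1 := faceOf_mem_Icc ha
    have i2 := faceOf_mem_Icc hb
    have i3 := faceOf_mem_Icc hc
    have i4 := faceOf_mem_Icc hd
    ext <;> omega
  rw [PolyPartition.faces, Finset.card_image_of_injOn hinj,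
    Finset.card_insert_of_notMem hnot]

/-- the diagonal set associated to a tree placed on `[0, n]` -/
def fwdDiags (n : ℕ) (τ : PTree) : Finset (ℕ × ℕ) := (toD 0 τ).erase (0, n)

/-- the polygon partition associated to a branching tree with `n` leaves -/
def Fpoly (n : ℕ) (τ : PTree) (h3 : τ.Branching) (h2 : τ.leafCount = n) :
    PolyPartition n where
  diags := fwdDiags n τ
  valid := by
    intro e he
    have he' : e ∈ toD 0 τ := Finset.mem_of_mem_erase he
    have hne : e ≠ (0, n) := Finset.ne_of_mem_erase he
    have hs := spanT τ 0 h3 e he'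
    rw [h2] at hs
    rw [prod_ne_iff] at hne
    exact ⟨hs.2.1, by omega, hne⟩
  noncross := by
    intro e he e' he'
    exact ncT τ 0 h3 e (Finset.mem_of_mem_erase he) e' (Finset.mem_of_mem_erase he')

lemma Fpoly_diags (n : ℕ) (τ : PTree) (h3 : τ.Branching) (h2 : τ.leafCount = n) :
    (Fpoly n τ h3 h2).diags = fwdDiags n τ := rfl

lemma tree_internal {n : ℕ} (hn : 2 ≤ n) {τ : PTree} (h2 : τ.leafCount = n) :
    ∃ t l, τ = .node (t :: l) := by
  cases τ with
  | node ts =>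
    cases ts with
    | nil => rw [leafCount_nil] at h2; omega
    | cons t l => exact ⟨t, l, rfl⟩

lemma top_mem_toD'' {n : ℕ} (hn : 2 ≤ n) {τ : PTree} (h2 : τ.leafCount = n) :
    ((0, n) : ℕ × ℕ) ∈ toD 0 τ := by
  obtain ⟨t, l, rfl⟩ := tree_internal hn h2
  have := top_mem_toD 0 t l
  rw [h2] at this
  simpa using this

lemma fwdDiags_card {n m : ℕ} (hn : 2 ≤ n) (hm : n < m) {τ : PTree}
    (h1 : τ.vertexCount = m) (h2 : τ.leafCount = n) (h3 : τ.Branching) :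
    (fwdDiags n τ).card = m - n - 1 := by
  have hcard : (toD 0 τ).card = m - n := by
    rw [cardT τ 0 h3]
    have := vertexCount_eq τ
    omega
  rw [fwdDiags, Finset.card_erase_of_mem (top_mem_toD'' hn h2), hcard]

lemma Fpoly_faces_card {n m : ℕ} (hn : 2 ≤ n) (hm : n < m) (τ : PTree)
    (h1 : τ.vertexCount = m) (h2 : τ.leafCount = n) (h3 : τ.Branching) :
    (Fpoly n τ h3 h2).faces.card = m - n := by
  rw [faces_card hn, Fpoly_diags, fwdDiags_card hn hm h1 h2 h3]
  omega

/-- the tree associated to a polygon partition -/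
def Gtree (n : ℕ) (π : PolyPartition n) : PTree := buildF (2 * n + 1) π.diags 0 n

lemma nested_eq_diags {n : ℕ} (π : PolyPartition n) : nested π.diags 0 n = π.diags := by
  ext e
  rw [mem_nested]
  constructor
  · exact fun h => h.1
  · intro h
    obtain ⟨hv1, hv2, hv3⟩ := π.valid e h
    refine ⟨h, by omega, hv2, ?_⟩
    rw [prod_ne_iff]
    exact hv3

lemma Gtree_spec {n : ℕ} (hn : 2 ≤ n) (π : PolyPartition n) :
    (Gtree n π).Branching ∧ (Gtree n π).leafCount = n ∧
      toD 0 (Gtree n π) = insert (0, n) π.diags := by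
  have hval : ∀ e ∈ π.diags, e.1 + 2 ≤ e.2 := fun e he => (π.valid e he).1
  have hnc : NC π.diags := π.noncross
  obtain ⟨hbr, hlc, htoD⟩ := (RT2 π.diags hval hnc (2 * n + 1)).1 0 n (by omega) (by omega)
  refine ⟨hbr, ?_, ?_⟩
  · show (buildF (2 * n + 1) π.diags 0 n).leafCount = n
    rw [hlc]; omega
  · show toD 0 (buildF (2 * n + 1) π.diags 0 n) = insert (0, n) π.diags
    rw [htoD, if_pos (by omega), nested_eq_diags]

lemma Gtree_counts {n m : ℕ} (hn : 2 ≤ n) (hm : n < m) (π : PolyPartition n)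
    (hfaces : π.faces.card = m - n) :
    (Gtree n π).vertexCount = m ∧ (Gtree n π).leafCount = n ∧ (Gtree n π).Branching := by
  obtain ⟨hbr, hlc, htoD⟩ := Gtree_spec hn π
  have hdiags : π.diags.card = m - n - 1 := by
    have := faces_card hn π
    omega
  have hnot : ((0, n) : ℕ × ℕ) ∉ π.diags := by
    intro hmem
    obtain ⟨_, _, h⟩ := π.valid _ hmem
    exact h ⟨rfl, rfl⟩
  have hinC : inC (Gtree n π) = m - n := by
    rw [← cardT _ 0 hbr, htoD, Finset.card_insert_of_notMem hnot, hdiags]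
    omega
  have := vertexCount_eq (Gtree n π)
  exact ⟨by omega, hlc, hbr⟩

lemma left_inverse {n : ℕ} (hn : 2 ≤ n) (τ : PTree) (h2 : τ.leafCount = n)
    (h3 : τ.Branching) : Gtree n (Fpoly n τ h3 h2) = τ := by
  rw [Gtree, Fpoly_diags]
  have := (RT1 (2 * n + 1)).1 τ h3 0 (fwdDiags n τ) ?_ (by omega)
  · rw [h2] at this
    simpa using this
  · intro e he1 he2 hne
    rw [h2] at he2 hne
    simp only [Nat.zero_add] at he2 hne
    rw [fwdDiags, Finset.mem_erase]
    constructor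
    · exact fun h => h.2
    · exact fun h => ⟨hne, h⟩

lemma polyPartition_ext {N : ℕ} {p q : PolyPartition N} (h : p.diags = q.diags) : p = q := by
  cases p; cases q
  simp only at h
  subst h
  rfl

lemma right_inverse {n : ℕ} (hn : 2 ≤ n) (π : PolyPartition n)
    (hb : (Gtree n π).Branching) (hl : (Gtree n π).leafCount = n) :
    Fpoly n (Gtree n π) hb hl = π := by
  apply polyPartition_ext
  rw [Fpoly_diags, fwdDiags]
  obtain ⟨_, _, htoD⟩ := Gtree_spec hn π
  have hnot : ((0, n) : ℕ × ℕ) ∉ π.diags := by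
    intro hmem
    obtain ⟨_, _, h⟩ := π.valid _ hmem
    exact h ⟨rfl, rfl⟩
  rw [htoD, Finset.erase_insert hnot]

end ImplicitDD

namespace ImplicitDD

/-- For all integers `m > n ≥ 2` there is a bijection between plane trees with
`m` vertices of which `n` are leaves, all of whose nonleaf vertices have at least two
descendants, and partitions with `m − n` faces of a convex polygon with `n + 1` vertices. -/
theorem plane_trees_equiv_polygon_partitions (m n : ℕ) (hn : 2 ≤ n) (hm : n < m) :
    Nonempty
      ({τ : PTree // τ.vertexCount = m ∧ τ.leafCount = n ∧ τ.Branching}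
        ≃ {π : PolyPartition n // π.faces.card = m - n}) := by

  refine ⟨{
    toFun := fun x => ⟨Fpoly n x.1 x.2.2.2 x.2.2.1,
      Fpoly_faces_card hn hm x.1 x.2.1 x.2.2.1 x.2.2.2⟩
    invFun := fun y => ⟨Gtree n y.1, Gtree_counts hn hm y.1 y.2⟩
    left_inv := fun x => Subtype.ext (left_inverse hn x.1 x.2.2.1 x.2.2.2)
    right_inv := fun y => Subtype.ext (right_inverse hn y.1
      (Gtree_counts hn hm y.1 y.2).2.2 (Gtree_counts hn hm y.1 y.2).2.1) }⟩


end ImplicitDD
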